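/- Let (Q_t)_{t≥0} be the transition semigroup of a measure-valued branching process on M(E) satisfying Condition 2.6. Then for each x ∈ E the mapping t ↦ V̄_t(x) is decreasing on (0,∞), and for every t > 0 and μ ∈ M(E), Q_t(μ, {0}) = e^{−μ(V̄_t)}, where {0} ⊂ M(E) is the singleton of the zero measure. -/

import Mathlib

open MeasureTheory Filter Set
open scoped ENNReal NNReal Topology

noncomputable section

namespace DW

section TV

variable {α : Type*} [MeasurableSpace α]

/-- The total variation measure `|μ - ν|` of the difference of two finite measures. -/
def tvMeasure (μ ν : Measure α) : Measure α := (μ - ν) + (ν - μ)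

/-- The total variation norm `‖μ - ν‖_var` of the difference of two finite measures. -/
def tvNorm (μ ν : Measure α) : ℝ := (tvMeasure μ ν Set.univ).toReal

/-- `P` is a coupling of the probability measures `Q1` and `Q2`. -/
def IsCoupling (P : Measure (α × α)) (Q1 Q2 : Measure α) : Prop :=
  IsProbabilityMeasure P ∧ P.map Prod.fst = Q1 ∧ P.map Prod.snd = Q2

/-- Convolution of two measures on an additive monoid. -/
def mconv [Add α] (P1 P2 : Measure α) : Measure α :=
  (P1.prod P2).map fun p => p.1 + p.2

end TV

/-- Supremum norm of a real valued function. -/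
def supNorm {β : Type*} (f : β → ℝ) : ℝ := ⨆ x, |f x|

section Defs

variable {E : Type*} [MeasurableSpace E]

/-- The pairing `μ(f) = ∫_E f dμ`. -/
def pair (μ : FiniteMeasure E) (f : E → ℝ) : ℝ := ∫ x, f x ∂(μ : Measure E)

/-- `f` belongs to `B(E)⁺`: bounded nonnegative Borel functions. -/
def BddBorelNN (f : E → ℝ) : Prop :=
  Measurable f ∧ (∃ C, ∀ x, f x ≤ C) ∧ ∀ x, 0 ≤ f x

/-- `f` belongs to `B(E)`: bounded Borel functions. -/
def BddBorel (f : E → ℝ) : Prop := Measurable f ∧ ∃ C, ∀ x, |f x| ≤ C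

/-- The Dirac measure `δ_x` as a finite measure. -/
def diracFM (x : E) : FiniteMeasure E := ⟨Measure.dirac x, inferInstance⟩

variable [MeasurableSpace (FiniteMeasure E)]

/-- The cumulant semigroup `V_t f(x) = -log ∫ e^{-ν(f)} Q_t(δ_x, dν)`. -/
def cumulant (Q : ℝ → FiniteMeasure E → Measure (FiniteMeasure E))
    (t : ℝ) (f : E → ℝ) (x : E) : ℝ :=
  - Real.log (∫ ν, Real.exp (-(pair ν f)) ∂(Q t (diracFM x)))

/-- The first-moment kernel `π_t f(x) = ∫ ν(f) Q_t(δ_x, dν)`. -/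
def momentKernel (Q : ℝ → FiniteMeasure E → Measure (FiniteMeasure E))
    (t : ℝ) (f : E → ℝ) (x : E) : ℝ :=
  ∫ ν, pair ν f ∂(Q t (diracFM x))

/-- `(Q_t)` is the transition semigroup of a measure-valued branching process. -/
structure IsMBSemigroup (Q : ℝ → FiniteMeasure E → Measure (FiniteMeasure E)) : Prop where
  meas : ∀ t, 0 ≤ t → ∀ s : Set (FiniteMeasure E), MeasurableSet s →
    Measurable fun μ => Q t μ s
  prob : ∀ t, 0 ≤ t → ∀ μ, IsProbabilityMeasure (Q t μ)
  init : ∀ μ, Q 0 μ = Measure.dirac μ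
  chapman : ∀ s, 0 ≤ s → ∀ t, 0 ≤ t → ∀ μ, (Q s μ).bind (Q t) = Q (s + t) μ
  branching : ∀ t, 0 ≤ t → ∀ μ f, BddBorelNN f →
    ∫ ν, Real.exp (-(pair ν f)) ∂(Q t μ) = Real.exp (-(pair μ (cumulant Q t f)))

/-- Condition 2.1: the first moments exist, are bounded kernels, and satisfy the
first-moment formula. -/
def Condition21 (Q : ℝ → FiniteMeasure E → Measure (FiniteMeasure E)) : Prop :=
  ∀ t, 0 ≤ t → ∀ f, BddBorelNN f →
    (∃ C, ∀ x, momentKernel Q t f x ≤ C) ∧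
    ∀ μ : FiniteMeasure E, ∫ ν, pair ν f ∂(Q t μ) = pair μ (momentKernel Q t f)

/-- Condition 2.6: for each `t > 0` the increasing limit
`V̄_t(x) = lim_{λ→∞} V_t(λ 1)(x)` exists and is bounded on `E`. -/
def Condition26 (Q : ℝ → FiniteMeasure E → Measure (FiniteMeasure E))
    (Vbar : ℝ → E → ℝ) : Prop :=
  ∀ t, 0 < t →
    (∀ x, Tendsto (fun lam : ℝ => cumulant Q t (fun _ => lam) x) atTop (𝓝 (Vbar t x))) ∧
    ∃ C, ∀ x, Vbar t x ≤ C

/-- The Wasserstein distance, relative to the total variation distance on `M(E)`,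
between two probability measures on `M(E)`. -/
def W1 (Q1 Q2 : Measure (FiniteMeasure E)) : ℝ :=
  sInf { r | ∃ P, IsCoupling P Q1 Q2 ∧
    r = ∫ p, tvNorm ((p.1 : FiniteMeasure E) : Measure E) ((p.2 : FiniteMeasure E) : Measure E) ∂P }

/-- The Lipschitz constant of `F : M(E) → ℝ` relative to the total variation distance. -/
def Lvar (F : FiniteMeasure E → ℝ) : ℝ :=
  sSup { r | ∃ μ ν : FiniteMeasure E, μ ≠ ν ∧
    r = |F μ - F ν| / tvNorm (μ : Measure E) (ν : Measure E) }

/-- `(N_t)` is a skew convolution semigroup associated with `(Q_t)`. -/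
def IsSCSemigroup (Q : ℝ → FiniteMeasure E → Measure (FiniteMeasure E))
    (N : ℝ → Measure (FiniteMeasure E)) : Prop :=
  (∀ t, 0 ≤ t → IsProbabilityMeasure (N t)) ∧
  ∀ r, 0 ≤ r → ∀ t, 0 ≤ t → N (r + t) = mconv ((N r).bind (Q t)) (N t)

/-- `(K_t)_{t>0}` is an entrance law of probability measures for `(Q_t)`. -/
def IsEntranceLaw (Q : ℝ → FiniteMeasure E → Measure (FiniteMeasure E))
    (K : ℝ → Measure (FiniteMeasure E)) : Prop :=
  (∀ r, 0 < r → IsProbabilityMeasure (K r)) ∧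
  ∀ r, 0 < r → ∀ t, 0 ≤ t → (K r).bind (Q t) = K (r + t)

/-- `I_s(K, f) = -log ∫ e^{-ν(f)} K_s(dν)`. -/
def IK (K : ℝ → Measure (FiniteMeasure E)) (s : ℝ) (f : E → ℝ) : ℝ :=
  - Real.log (∫ ν, Real.exp (-(pair ν f)) ∂(K s))

/-- The kernel `γ(x, dy) = η(x, dy) + ∫ ν_x(dy) H(x, dν)`. -/
def gammaKer (η : E → Measure E) (H : E → Measure (FiniteMeasure E)) (x : E) :
    Measure E :=
  η x + (H x).bind fun ν => ((ν : FiniteMeasure E) : Measure E).restrict {x}ᶜ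

/-- The branching mechanism
`φ(x,f) = b(x)f(x) + c(x)f(x)² - γ(x,f) + ∫ [e^{-ν(f)} - 1 + ν(f)] H(x,dν)`. -/
def phi (b c : E → ℝ) (η : E → Measure E) (H : E → Measure (FiniteMeasure E))
    (x : E) (f : E → ℝ) : ℝ :=
  b x * f x + c x * f x ^ 2 - (∫ y, f y ∂(gammaKer η H x)) +
    ∫ ν, (Real.exp (-(pair ν f)) - 1 + pair ν f) ∂(H x)

/-- The local projection `φ₁` of the branching mechanism `φ`. -/
def phi1 (b c : E → ℝ) (η : E → Measure E) (H : E → Measure (FiniteMeasure E))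
    (x : E) (z : ℝ) : ℝ :=
  (b x - (gammaKer η H x Set.univ).toReal) * z + c x * z ^ 2 +
    ∫ ν, (Real.exp (-(z * (((ν : FiniteMeasure E) : Measure E) {x}).toReal)) - 1 +
      z * (((ν : FiniteMeasure E) : Measure E) {x}).toReal) ∂(H x)

/-- A spatially independent branching mechanism
`φ_*(z) = b_* z + c_* z² + ∫ (e^{-zu} - 1 + zu) m_*(du)`. -/
def phiStar (bs cs : ℝ) (m : Measure ℝ) (z : ℝ) : ℝ :=
  bs * z + cs * z ^ 2 + ∫ u, (Real.exp (-(z * u)) - 1 + z * u) ∂m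

/-- The data `(b_*, c_*, m_*)` of a spatially independent branching mechanism. -/
def IsBranchingMechanismStar (bs cs : ℝ) (m : Measure ℝ) : Prop :=
  0 ≤ cs ∧ m {u | u ≤ 0} = 0 ∧ (∫⁻ u, ENNReal.ofReal (min u (u ^ 2)) ∂m) < ⊤

/-- Grey's condition for `φ_*`. -/
def GreyCondition (bs cs : ℝ) (m : Measure ℝ) : Prop :=
  ∃ z0 : ℝ, 0 < z0 ∧ (∀ z, z0 ≤ z → 0 < phiStar bs cs m z) ∧
    IntegrableOn (fun z => (phiStar bs cs m z)⁻¹) (Set.Ioi z0)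

/-- `v` is the cumulant semigroup of the CB-process with branching mechanism `φ_*`:
the unique nonnegative solution of `∂_t v_t(λ) = -φ_*(v_t(λ))`, `v_0(λ) = λ`. -/
def IsCBCumulant (bs cs : ℝ) (m : Measure ℝ) (v : ℝ → ℝ → ℝ) : Prop :=
  ∀ lam, 0 ≤ lam → v 0 lam = lam ∧
    ∀ t, 0 ≤ t → 0 ≤ v t lam ∧ HasDerivAt (fun s => v s lam) (-(phiStar bs cs m (v t lam))) t

/-- `(P_t)` is the transition semigroup of a Borel right process: a semigroup of
Markov probability kernels on `E`. -/
structure IsMarkovSemigroup (P : ℝ → E → Measure E) : Prop where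
  meas : ∀ t, 0 ≤ t → ∀ s : Set E, MeasurableSet s → Measurable fun x => P t x s
  prob : ∀ t, 0 ≤ t → ∀ x, IsProbabilityMeasure (P t x)
  init : ∀ x, P 0 x = Measure.dirac x
  chapman : ∀ s, 0 ≤ s → ∀ t, 0 ≤ t → ∀ x, (P s x).bind (P t) = P (s + t) x

/-- `π` is the first-moment semigroup of the `(ξ,φ)`-superprocess: the unique
locally bounded nonnegative solution of
`π_t f(x) = P_t f(x) + ∫_0^t P_{t-s}((γ - b) π_s f)(x) ds`. -/
def IsMomentSemigroup (P : ℝ → E → Measure E) (b : E → ℝ) (γ : E → Measure E)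
    (π : ℝ → (E → ℝ) → E → ℝ) : Prop :=
  (∀ t, 0 ≤ t → ∀ f, BddBorelNN f → ∀ x, 0 ≤ π t f x) ∧
  (∀ f, BddBorelNN f → ∀ T, 0 ≤ T → ∃ C, ∀ t ∈ Set.Icc (0 : ℝ) T, ∀ x, π t f x ≤ C) ∧
  ∀ f, BddBorelNN f → ∀ t, 0 ≤ t → ∀ x,
    π t f x = (∫ y, f y ∂(P t x)) +
      ∫ s in Set.Ioc (0 : ℝ) t, ∫ y, ((∫ z, π s f z ∂(γ y)) - b y * π s f y) ∂(P (t - s) x)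

/-- The data of a `(ξ,φ)`-superprocess: the underlying Markov semigroup `P`, the
branching mechanism parameters `b`, `c`, `η`, `H`, the cumulant semigroup `V`
(the unique locally bounded nonnegative solution of the evolution equation), and
the transition semigroup `Q` on `M(E)` determined by the Laplace functional. -/
structure Superprocess (P : ℝ → E → Measure E) (b c : E → ℝ)
    (η : E → Measure E) (H : E → Measure (FiniteMeasure E))
    (V : ℝ → (E → ℝ) → E → ℝ)
    (Q : ℝ → FiniteMeasure E → Measure (FiniteMeasure E)) : Prop where
  markov : IsMarkovSemigroup P
  hb : BddBorel b
  hc : BddBorel c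
  hcnn : ∀ x, 0 ≤ c x
  hηmeas : ∀ s : Set E, MeasurableSet s → Measurable fun x => η x s
  hηbdd : ∃ C : ℝ≥0, ∀ x, η x Set.univ ≤ (C : ℝ≥0∞)
  hHmeas : ∀ s : Set (FiniteMeasure E), MeasurableSet s → Measurable fun x => H x s
  hHzero : ∀ x, H x {0} = 0
  hHsf : ∀ x, SigmaFinite (H x)
  hHmom : ∃ C : ℝ≥0, ∀ x,
    (∫⁻ ν, (min (ν.mass : ℝ≥0∞) ((ν.mass : ℝ≥0∞) ^ 2) +
      ((ν : FiniteMeasure E) : Measure E) {x}ᶜ) ∂(H x)) ≤ (C : ℝ≥0∞)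
  hVnn : ∀ t, 0 ≤ t → ∀ f, BddBorelNN f → ∀ x, 0 ≤ V t f x
  hVbdd : ∀ f, BddBorelNN f → ∀ T, 0 ≤ T → ∃ C, ∀ t ∈ Set.Icc (0 : ℝ) T, ∀ x, V t f x ≤ C
  hVeq : ∀ f, BddBorelNN f → ∀ t, 0 ≤ t → ∀ x,
    V t f x = (∫ y, f y ∂(P t x)) -
      ∫ s in Set.Ioc (0 : ℝ) t, ∫ y, phi b c η H y (V s f) ∂(P (t - s) x)
  hQmeas : ∀ t, 0 ≤ t → ∀ s : Set (FiniteMeasure E), MeasurableSet s →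
    Measurable fun μ => Q t μ s
  hQprob : ∀ t, 0 ≤ t → ∀ μ, IsProbabilityMeasure (Q t μ)
  hQlaplace : ∀ t, 0 ≤ t → ∀ μ f, BddBorelNN f →
    ∫ ν, Real.exp (-(pair ν f)) ∂(Q t μ) = Real.exp (-(pair μ (V t f)))

end Defs

end DW
namespace DW

section Aux

variable {E : Type*} [TopologicalSpace E] [MeasurableSpace E] [BorelSpace E]
  [MeasurableSpace (FiniteMeasure E)] [BorelSpace (FiniteMeasure E)]

lemma bddBorelNN_const {c : ℝ} (hc : 0 ≤ c) : BddBorelNN (fun (_ : E) => c) :=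
  ⟨measurable_const, ⟨c, fun _ => le_rfl⟩, fun _ => hc⟩

lemma pair_const (μ : FiniteMeasure E) (c : ℝ) :
    pair μ (fun _ => c) = (μ.mass : ℝ) * c := by
  simp only [pair, integral_const, smul_eq_mul]
  rw [measureReal_def, ← FiniteMeasure.ennreal_mass, ENNReal.coe_toReal]

lemma pair_zero_meas (f : E → ℝ) : pair (0 : FiniteMeasure E) f = 0 := by
  simp [pair, FiniteMeasure.toMeasure_zero]

lemma measurableSet_singleton_zero :
    MeasurableSet {(0 : FiniteMeasure E)} := by
  have h : {(0 : FiniteMeasure E)} = (fun ν : FiniteMeasure E => ν.mass) ⁻¹' {0} := by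
    ext ν
    simp [FiniteMeasure.mass_zero_iff]
  rw [h]
  exact FiniteMeasure.continuous_mass.measurable (measurableSet_singleton 0)

lemma measurable_expPair (lam : ℝ) :
    Measurable (fun ν : FiniteMeasure E => Real.exp (-(pair ν (fun _ => lam)))) := by
  have h : Continuous (fun ν : FiniteMeasure E => Real.exp (-((ν.mass : ℝ) * lam))) :=
    Real.continuous_exp.comp
      (((NNReal.continuous_coe.comp FiniteMeasure.continuous_mass).mul continuous_const).neg)
  have := h.measurable
  convert this using 2 with ν
  rw [pair_const]

lemma norm_expPair_le {lam : ℝ} (hlam : 0 ≤ lam) (ν : FiniteMeasure E) :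
    ‖Real.exp (-(pair ν (fun _ => lam)))‖ ≤ 1 := by
  rw [Real.norm_eq_abs, Real.abs_exp, Real.exp_le_one_iff, pair_const]
  exact neg_nonpos.mpr (mul_nonneg (ν.mass.coe_nonneg) hlam)

lemma integrable_expPair (P : Measure (FiniteMeasure E)) [IsFiniteMeasure P]
    {lam : ℝ} (hlam : 0 ≤ lam) :
    Integrable (fun ν : FiniteMeasure E => Real.exp (-(pair ν (fun _ => lam)))) P :=
  Integrable.mono' (integrable_const 1) (measurable_expPair lam).aestronglyMeasurable
    (Filter.Eventually.of_forall (norm_expPair_le hlam))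

/-- The basic limit: as `λ → ∞`, `∫ e^{-λ ν(1)} P(dν) → P({0})`. -/
lemma tendsto_integral_expPair (P : Measure (FiniteMeasure E)) [IsProbabilityMeasure P] :
    Tendsto (fun lam : ℝ => ∫ ν, Real.exp (-(pair ν (fun _ => lam))) ∂P) atTop
      (𝓝 ((P {(0 : FiniteMeasure E)}).toReal)) := by
  have hval : ∫ ν, Set.indicator {(0 : FiniteMeasure E)} (fun _ => (1 : ℝ)) ν ∂P
      = (P {(0 : FiniteMeasure E)}).toReal := by
    rw [integral_indicator_const (1 : ℝ) measurableSet_singleton_zero, smul_eq_mul, mul_one, measureReal_def]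
  rw [← hval]
  apply tendsto_integral_filter_of_dominated_convergence (bound := fun _ => (1 : ℝ))
  · exact Filter.Eventually.of_forall fun lam => (measurable_expPair lam).aestronglyMeasurable
  · exact (Filter.eventually_ge_atTop (0 : ℝ)).mono fun lam hlam =>
      Filter.Eventually.of_forall (norm_expPair_le hlam)
  · exact integrable_const 1
  · refine Filter.Eventually.of_forall fun ν => ?_
    by_cases hν : ν = 0
    · subst hν
      have h1 : ∀ lam : ℝ, Real.exp (-(pair (0 : FiniteMeasure E) (fun _ => lam))) = 1 := by
        intro lam; rw [pair_zero_meas]; simp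
      simp only [h1]
      have : Set.indicator {(0 : FiniteMeasure E)} (fun _ => (1 : ℝ)) 0 = 1 := by
        simp [Set.indicator_of_mem]
      rw [this]
      exact tendsto_const_nhds
    · have hm : (0 : ℝ) < (ν.mass : ℝ) := by
        have := (FiniteMeasure.mass_zero_iff ν).not.mpr hν
        positivity
      have hind : Set.indicator {(0 : FiniteMeasure E)} (fun _ => (1 : ℝ)) ν = 0 := by
        simp [Set.indicator_of_notMem, hν]
      rw [hind]
      have h1 : Tendsto (fun lam : ℝ => -((ν.mass : ℝ) * lam)) atTop atBot := by
        apply Filter.tendsto_neg_atBot_iff.mpr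
        exact Tendsto.const_mul_atTop hm tendsto_id
      have h2 := Real.tendsto_exp_atBot.comp h1
      refine h2.congr fun lam => ?_
      simp only [Function.comp_apply, pair_const]

lemma exp_neg_cumulant (Q : ℝ → FiniteMeasure E → Measure (FiniteMeasure E))
    (hQ : IsMBSemigroup Q) {t : ℝ} (ht : 0 ≤ t) {lam : ℝ} (hlam : 0 ≤ lam) (x : E) :
    Real.exp (-(cumulant Q t (fun _ => lam) x))
      = ∫ ν, Real.exp (-(pair ν (fun _ => lam))) ∂(Q t (diracFM x)) := by
  haveI := hQ.prob t ht (diracFM x)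
  have hpos : 0 < ∫ ν, Real.exp (-(pair ν (fun _ => lam))) ∂(Q t (diracFM x)) := by
    rw [integral_pos_iff_support_of_nonneg (fun ν => (Real.exp_pos _).le)
      (integrable_expPair _ hlam)]
    have : (Function.support fun ν : FiniteMeasure E =>
        Real.exp (-(pair ν (fun _ => lam)))) = Set.univ := by
      ext ν; simp [Function.support, (Real.exp_pos _).ne']
    rw [this]
    simp
  rw [cumulant, neg_neg, Real.exp_log hpos]

lemma cumulant_mono (Q : ℝ → FiniteMeasure E → Measure (FiniteMeasure E))
    (hQ : IsMBSemigroup Q) {t : ℝ} (ht : 0 ≤ t) (x : E) {l1 l2 : ℝ}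
    (h0 : 0 ≤ l1) (h12 : l1 ≤ l2) :
    cumulant Q t (fun _ => l1) x ≤ cumulant Q t (fun _ => l2) x := by
  haveI := hQ.prob t ht (diracFM x)
  have key : Real.exp (-(cumulant Q t (fun _ => l2) x))
      ≤ Real.exp (-(cumulant Q t (fun _ => l1) x)) := by
    rw [exp_neg_cumulant Q hQ ht (h0.trans h12) x, exp_neg_cumulant Q hQ ht h0 x]
    refine integral_mono (integrable_expPair _ (h0.trans h12)) (integrable_expPair _ h0)
      fun ν => ?_
    apply Real.exp_le_exp.mpr
    rw [pair_const, pair_const]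
    have := ν.mass.coe_nonneg
    nlinarith
  have := Real.exp_le_exp.mp key
  linarith

lemma cumulant_zero_eq (Q : ℝ → FiniteMeasure E → Measure (FiniteMeasure E))
    (hQ : IsMBSemigroup Q) {t : ℝ} (ht : 0 ≤ t) (x : E) :
    cumulant Q t (fun _ => (0 : ℝ)) x = 0 := by
  haveI := hQ.prob t ht (diracFM x)
  have h1 : (fun ν : FiniteMeasure E => Real.exp (-(pair ν (fun _ => (0 : ℝ)))))
      = fun _ => (1 : ℝ) := by
    funext ν; rw [pair_const]; simp
  rw [cumulant, h1]
  simp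

lemma cumulant_nonneg (Q : ℝ → FiniteMeasure E → Measure (FiniteMeasure E))
    (hQ : IsMBSemigroup Q) {t : ℝ} (ht : 0 ≤ t) {lam : ℝ} (hlam : 0 ≤ lam) (x : E) :
    0 ≤ cumulant Q t (fun _ => lam) x := by
  rw [← cumulant_zero_eq Q hQ ht x]
  exact cumulant_mono Q hQ ht x le_rfl hlam

lemma cumulant_le_Vbar (Q : ℝ → FiniteMeasure E → Measure (FiniteMeasure E))
    (hQ : IsMBSemigroup Q) {Vbar : ℝ → E → ℝ} (h26 : Condition26 Q Vbar)
    {t : ℝ} (ht : 0 < t) {lam : ℝ} (hlam : 0 ≤ lam) (x : E) :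
    cumulant Q t (fun _ => lam) x ≤ Vbar t x := by
  refine ge_of_tendsto ((h26 t ht).1 x) ?_
  exact (Filter.eventually_ge_atTop lam).mono fun l hl =>
    cumulant_mono Q hQ ht.le x hlam hl

lemma exp_neg_Vbar (Q : ℝ → FiniteMeasure E → Measure (FiniteMeasure E))
    (hQ : IsMBSemigroup Q) {Vbar : ℝ → E → ℝ} (h26 : Condition26 Q Vbar)
    {t : ℝ} (ht : 0 < t) (x : E) :
    Real.exp (-(Vbar t x)) = ((Q t (diracFM x)) {(0 : FiniteMeasure E)}).toReal := by
  haveI := hQ.prob t ht.le (diracFM x)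
  have h1 := tendsto_integral_expPair (Q t (diracFM x))
  have h2 : Tendsto (fun lam : ℝ => Real.exp (-(cumulant Q t (fun _ => lam) x))) atTop
      (𝓝 (Real.exp (-(Vbar t x)))) :=
    (Real.continuous_exp.tendsto _).comp ((h26 t ht).1 x).neg
  refine tendsto_nhds_unique (h2.congr' ?_) h1
  exact (Filter.eventually_ge_atTop (0 : ℝ)).mono fun lam hlam =>
    exp_neg_cumulant Q hQ ht.le hlam x

lemma Q_zero_zero (Q : ℝ → FiniteMeasure E → Measure (FiniteMeasure E))
    (hQ : IsMBSemigroup Q) {r : ℝ} (hr : 0 ≤ r) :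
    Q r 0 {(0 : FiniteMeasure E)} = 1 := by
  haveI := hQ.prob r hr (0 : FiniteMeasure E)
  have h1 := tendsto_integral_expPair (Q r (0 : FiniteMeasure E))
  have h2 : Tendsto (fun _ : ℝ => (1 : ℝ)) atTop
      (𝓝 ((Q r (0 : FiniteMeasure E) {(0 : FiniteMeasure E)}).toReal)) := by
    refine h1.congr' ?_
    refine (Filter.eventually_ge_atTop (0 : ℝ)).mono fun lam hlam => ?_
    show (∫ ν, Real.exp (-(pair ν (fun _ => lam))) ∂(Q r (0 : FiniteMeasure E))) = 1
    rw [hQ.branching r hr 0 _ (bddBorelNN_const hlam), pair_zero_meas]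
    simp
  have h3 : (Q r (0 : FiniteMeasure E) {(0 : FiniteMeasure E)}).toReal = 1 :=
    tendsto_nhds_unique h2 tendsto_const_nhds
  exact (ENNReal.toReal_eq_one_iff _).mp h3

lemma Q_zero_mono (Q : ℝ → FiniteMeasure E → Measure (FiniteMeasure E))
    (hQ : IsMBSemigroup Q) {s r : ℝ} (hs : 0 ≤ s) (hr : 0 ≤ r) (μ : FiniteMeasure E) :
    Q s μ {(0 : FiniteMeasure E)} ≤ Q (s + r) μ {(0 : FiniteMeasure E)} := by
  have hmeas : Measurable (Q r) :=
    Measure.measurable_of_measurable_coe _ fun u hu => hQ.meas r hr u hu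
  rw [← hQ.chapman s hs r hr μ,
    Measure.bind_apply measurableSet_singleton_zero hmeas.aemeasurable]
  have hsub : ∫⁻ η in {(0 : FiniteMeasure E)}, Q r η {(0 : FiniteMeasure E)} ∂(Q s μ)
      ≤ ∫⁻ η, Q r η {(0 : FiniteMeasure E)} ∂(Q s μ) :=
    lintegral_mono' Measure.restrict_le_self le_rfl
  refine le_trans ?_ hsub
  have hcongr : ∫⁻ η in {(0 : FiniteMeasure E)}, Q r η {(0 : FiniteMeasure E)} ∂(Q s μ)
      = ∫⁻ _ in {(0 : FiniteMeasure E)}, (1 : ℝ≥0∞) ∂(Q s μ) := by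
    refine setLIntegral_congr_fun measurableSet_singleton_zero
      (fun η hη => ?_)
    rw [Set.mem_singleton_iff] at hη
    rw [hη, Q_zero_zero Q hQ hr]
  rw [hcongr, setLIntegral_one]

lemma continuous_diracFM : Continuous (diracFM : E → FiniteMeasure E) := by
  rw [continuous_iff_continuousAt]
  intro x
  rw [ContinuousAt, FiniteMeasure.tendsto_iff_forall_testAgainstNN_tendsto]
  intro f
  have key : ∀ y : E, (diracFM y).testAgainstNN f = f y := by
    intro y
    simp only [FiniteMeasure.testAgainstNN]
    have hcoe : ((diracFM y : FiniteMeasure E) : Measure E) = Measure.dirac y := rfl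
    rw [hcoe, lintegral_dirac' y (f.continuous.measurable.coe_nnreal_ennreal)]
    simp
  simp_rw [key]
  exact f.continuous.tendsto x

lemma measurable_cumulant (Q : ℝ → FiniteMeasure E → Measure (FiniteMeasure E))
    (hQ : IsMBSemigroup Q) {t : ℝ} (ht : 0 ≤ t) (lam : ℝ) :
    Measurable (fun x : E => cumulant Q t (fun _ => lam) x) := by
  have hk : Measurable (fun x : E => Q t (diracFM x)) :=
    Measure.measurable_of_measurable_coe _ fun u hu =>
      (hQ.meas t ht u hu).comp continuous_diracFM.measurable
  have hG : Measurable (fun ν : FiniteMeasure E =>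
      ENNReal.ofReal (Real.exp (-(pair ν (fun _ => lam))))) :=
    (measurable_expPair lam).ennreal_ofReal
  have h1 : Measurable (fun x : E => ∫⁻ ν,
      ENNReal.ofReal (Real.exp (-(pair ν (fun _ => lam)))) ∂(Q t (diracFM x))) :=
    (Measure.measurable_lintegral hG).comp hk
  have hrw : ∀ x : E, ∫ ν, Real.exp (-(pair ν (fun _ => lam))) ∂(Q t (diracFM x))
      = (∫⁻ ν, ENNReal.ofReal (Real.exp (-(pair ν (fun _ => lam))))
          ∂(Q t (diracFM x))).toReal := fun x =>
    integral_eq_lintegral_of_nonneg_ae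
      (Filter.Eventually.of_forall fun ν => (Real.exp_pos _).le)
      (measurable_expPair lam).aestronglyMeasurable
  unfold cumulant
  simp_rw [hrw]
  exact (Real.measurable_log.comp h1.ennreal_toReal).neg

end Aux

/-- Proposition 2.7: under Condition 2.6, `t ↦ V̄_t(x)` is
decreasing on `(0,∞)` and `Q_t(μ, {0}) = e^{-μ(V̄_t)}`. -/
theorem extinction_probability_MB
    {E : Type*} [TopologicalSpace E] [MeasurableSpace E] [BorelSpace E]
    [StandardBorelSpace E]
    [MeasurableSpace (FiniteMeasure E)] [BorelSpace (FiniteMeasure E)]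
    (Q : ℝ → FiniteMeasure E → Measure (FiniteMeasure E))
    (hQ : IsMBSemigroup Q) (Vbar : ℝ → E → ℝ) (h26 : Condition26 Q Vbar) :
    (∀ x : E, ∀ s t : ℝ, 0 < s → s ≤ t → Vbar t x ≤ Vbar s x) ∧
    ∀ t, 0 < t → ∀ μ : FiniteMeasure E,
      Q t μ {(0 : FiniteMeasure E)}
        = ENNReal.ofReal (Real.exp (-(pair μ (Vbar t)))) := by
  constructor
  · intro x s t hs hst
    have ht : 0 < t := lt_of_lt_of_le hs hst
    haveI := hQ.prob t ht.le (diracFM x)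
    have h1 := exp_neg_Vbar Q hQ h26 hs x
    have h2 := exp_neg_Vbar Q hQ h26 ht x
    have hmono : Q s (diracFM x) {(0 : FiniteMeasure E)}
        ≤ Q t (diracFM x) {(0 : FiniteMeasure E)} := by
      have := Q_zero_mono Q hQ hs.le (by linarith : (0 : ℝ) ≤ t - s) (diracFM x)
      rwa [show s + (t - s) = t by ring] at this
    have hle : Real.exp (-(Vbar s x)) ≤ Real.exp (-(Vbar t x)) := by
      rw [h1, h2]
      exact ENNReal.toReal_mono (measure_ne_top _ _) hmono
    have := Real.exp_le_exp.mp hle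
    linarith
  · intro t ht μ
    haveI := hQ.prob t ht.le μ
    have hI : Tendsto (fun n : ℕ => ∫ ν, Real.exp (-(pair ν (fun _ => (n : ℝ)))) ∂(Q t μ))
        atTop (𝓝 ((Q t μ {(0 : FiniteMeasure E)}).toReal)) :=
      (tendsto_integral_expPair (Q t μ)).comp tendsto_natCast_atTop_atTop
    have hbr : ∀ n : ℕ, ∫ ν, Real.exp (-(pair ν (fun _ => (n : ℝ)))) ∂(Q t μ)
        = Real.exp (-(pair μ (cumulant Q t (fun _ => (n : ℝ))))) := fun n =>
      hQ.branching t ht.le μ _ (bddBorelNN_const (Nat.cast_nonneg n))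
    obtain ⟨C, hC⟩ := (h26 t ht).2
    have hpair : Tendsto (fun n : ℕ => pair μ (cumulant Q t (fun _ => (n : ℝ)))) atTop
        (𝓝 (pair μ (Vbar t))) := by
      apply tendsto_integral_of_dominated_convergence (bound := fun _ => |C|)
      · exact fun n => (measurable_cumulant Q hQ ht.le (n : ℝ)).aestronglyMeasurable
      · exact integrable_const _
      · intro n
        refine Filter.Eventually.of_forall fun x => ?_
        have h0 : 0 ≤ cumulant Q t (fun _ => ((n : ℕ) : ℝ)) x :=
          cumulant_nonneg Q hQ ht.le (Nat.cast_nonneg n) x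
        have hub : cumulant Q t (fun _ => ((n : ℕ) : ℝ)) x ≤ Vbar t x :=
          cumulant_le_Vbar Q hQ h26 ht (Nat.cast_nonneg n) x
        have := hC x
        rw [Real.norm_eq_abs, abs_of_nonneg h0]
        calc cumulant Q t (fun _ => ((n : ℕ) : ℝ)) x ≤ C := hub.trans (hC x)
          _ ≤ |C| := le_abs_self C
      · exact Filter.Eventually.of_forall fun x =>
          ((h26 t ht).1 x).comp tendsto_natCast_atTop_atTop
    have hRHS : Tendsto (fun n : ℕ => Real.exp (-(pair μ (cumulant Q t (fun _ => (n : ℝ))))))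
        atTop (𝓝 (Real.exp (-(pair μ (Vbar t))))) :=
      (Real.continuous_exp.tendsto _).comp hpair.neg
    have hkey : (Q t μ {(0 : FiniteMeasure E)}).toReal = Real.exp (-(pair μ (Vbar t))) :=
      tendsto_nhds_unique (hI.congr hbr) hRHS
    rw [← hkey, ENNReal.ofReal_toReal (measure_ne_top _ _)]


end DW
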